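/- Let k ≥ 1 be an integer. A multiset S with elements in Z_2^k is reduced if and only if S is a set of linearly independent vectors of Z_2^k viewed as a vector space over F_2 (in particular each element has multiplicity one). Consequently, h_2(k) = k. -/

import Mathlib

/-- The sumset `Σ(S)` of a multiset `S` with elements in an abelian group:
the set of all sums of submultisets of `S` (the empty sum being `0`). -/
def sumset {A : Type*} [AddCommGroup A] [DecidableEq A] (S : Multiset A) : Finset A :=
  (S.powerset.map Multiset.sum).toFinset

/-- A multiset `S` is reduced if removing one copy of any of its elements strictly
decreases the size of its sumset. -/
def IsReducedMultiset {A : Type*} [AddCommGroup A] [DecidableEq A] (S : Multiset A) : Prop :=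
  ∀ s ∈ S, (sumset (S - {s})).card < (sumset S).card

/-- `h_p(k)`: the largest size of a reduced multiset with elements in `ℤ_p^k`. -/
noncomputable def hmax (p k : ℕ) : ℕ :=
  sSup {n : ℕ | ∃ S : Multiset (Fin k → ZMod p), IsReducedMultiset S ∧ Multiset.card S = n}

open Submodule Set

section aux

variable {k : ℕ}

local notation "V" => (Fin k → ZMod 2)

lemma aux_mem_sumset {A : Type*} [AddCommGroup A] [DecidableEq A] {S : Multiset A} {x : A} :
    x ∈ sumset S ↔ ∃ t ≤ S, t.sum = x := by
  simp [sumset, Multiset.mem_powerset]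

lemma aux_sumset_coe (S : Multiset V) :
    (sumset S : Set V) = (span (ZMod 2) (S.toFinset : Set V) : Set V) := by
  ext x
  simp only [Finset.mem_coe, aux_mem_sumset, SetLike.mem_coe]
  constructor
  · rintro ⟨t, ht, rfl⟩
    exact multiset_sum_mem _ fun y hy =>
      subset_span (by simpa using Multiset.mem_of_le ht hy)
  · intro hx
    obtain ⟨f, hf⟩ := mem_span_finset.mp hx
    classical
    refine ⟨(S.toFinset.filter (fun i => f i = 1)).val, ?_, ?_⟩
    · refine le_trans ?_ S.dedup_le
      exact (Multiset.le_iff_subset (S.toFinset.filter (fun i => f i = 1)).nodup).mpr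
        (fun a ha => by simpa using (Finset.mem_filter.mp ha).1)
    · have h1 : ((S.toFinset.filter (fun i => f i = 1)).val.sum)
          = ∑ i ∈ S.toFinset.filter (fun i => f i = 1), i := by
        simp [Finset.sum]
      have hz : ∀ a : ZMod 2, a = 0 ∨ a = 1 := by decide
      rw [h1, Finset.sum_filter, ← hf.2]
      refine Finset.sum_congr rfl fun i _ => ?_
      rcases hz (f i) with h | h <;> simp [h]

lemma aux_span_sub_le (S : Multiset V) (s : V) :
    span (ZMod 2) (((S - {s}).toFinset : Set V)) ≤ span (ZMod 2) ((S.toFinset : Set V)) := by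
  apply span_mono
  intro x hx
  simp only [Finset.mem_coe, Multiset.mem_toFinset] at hx ⊢
  exact Multiset.mem_of_le (tsub_le_self) hx

lemma aux_mem_sub {S : Multiset V} {x s : V} (h : x ∈ S) (hne : x ≠ s) : x ∈ S - {s} := by
  rw [← Multiset.count_pos, Multiset.count_sub]
  have h1 : Multiset.count x {s} = 0 := by
    simp [Multiset.count_singleton, hne]
  have h2 : 0 < Multiset.count x S := Multiset.count_pos.mpr h
  omega

lemma aux_reduced_iff_span (S : Multiset V) :
    IsReducedMultiset S ↔ ∀ s ∈ S, s ∉ span (ZMod 2) (((S - {s}).toFinset : Set V)) := by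
  unfold IsReducedMultiset
  refine forall₂_congr fun s hs => ?_
  rw [← Set.ncard_coe_finset, ← Set.ncard_coe_finset, aux_sumset_coe, aux_sumset_coe]
  constructor
  · intro hlt hmem
    have hle : span (ZMod 2) ((S.toFinset : Set V)) ≤ span (ZMod 2) (((S - {s}).toFinset : Set V)) := by
      rw [span_le]
      intro x hx
      simp only [Finset.mem_coe, Multiset.mem_toFinset] at hx
      rcases eq_or_ne x s with rfl | hne
      · exact hmem
      · exact subset_span (by simpa using aux_mem_sub hx hne)
    rw [le_antisymm (aux_span_sub_le S s) hle] at hlt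
    exact lt_irrefl _ hlt
  · intro hnot
    apply Set.ncard_lt_ncard _ (Set.toFinite _)
    refine ⟨aux_span_sub_le S s, fun hsub => hnot ?_⟩
    exact hsub (subset_span (by simpa using hs))

lemma aux_toFinset_sub (S : Multiset V) (hnd : S.Nodup) (s : V) (hs : s ∈ S) :
    (((S - {s}).toFinset : Finset V) : Set V) = ((S.toFinset : Finset V) : Set V) \ {s} := by
  ext x
  simp only [Finset.coe_sdiff, Set.mem_diff, Finset.mem_coe, Multiset.mem_toFinset,
    Set.mem_singleton_iff]
  constructor
  · intro hx
    have hxS : x ∈ S := Multiset.mem_of_le tsub_le_self hx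
    refine ⟨hxS, ?_⟩
    rintro rfl
    have hc := Multiset.nodup_iff_count_le_one.mp hnd x
    have := Multiset.count_pos.mpr hx
    rw [Multiset.count_sub, Multiset.count_singleton_self] at this
    omega
  · rintro ⟨hx, hne⟩
    exact aux_mem_sub hx hne

lemma aux_image_diff (S : Multiset V) (x : V) (hx : x ∈ (S.toFinset : Set V)) :
    (fun y : (S.toFinset : Set V) => (y : V)) '' (Set.univ \ {⟨x, hx⟩}) =
      ((S.toFinset : Set V)) \ {x} := by
  ext y
  constructor
  · rintro ⟨⟨z, hz⟩, ⟨-, hne⟩, rfl⟩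
    exact ⟨hz, fun h => hne (by simpa [Subtype.ext_iff] using h)⟩
  · rintro ⟨hy, hne⟩
    exact ⟨⟨y, hy⟩, ⟨trivial, fun h => hne (by simpa [Subtype.ext_iff] using h)⟩, rfl⟩

lemma aux_main (S : Multiset V) :
    IsReducedMultiset S ↔
      (S.Nodup ∧ LinearIndependent (ZMod 2)
        (fun x : (S.toFinset : Set V) => (x : V))) := by
  rw [aux_reduced_iff_span]
  constructor
  · intro h
    have hnd : S.Nodup := by
      rw [Multiset.nodup_iff_count_le_one]
      by_contra hc
      push_neg at hc
      obtain ⟨s, hs2⟩ := hc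
      have hsS : s ∈ S := by
        rw [← Multiset.count_pos]; omega
      refine h s hsS (subset_span ?_)
      simp only [Finset.mem_coe, Multiset.mem_toFinset]
      rw [← Multiset.count_pos, Multiset.count_sub, Multiset.count_singleton_self]
      omega
    refine ⟨hnd, ?_⟩
    rw [linearIndependent_iff_notMem_span]
    rintro ⟨x, hx⟩ hmem
    have hxS : x ∈ S := by simpa using hx
    apply h x hxS
    rwa [aux_toFinset_sub S hnd x hxS, ← aux_image_diff S x hx]
  · rintro ⟨hnd, hli⟩ s hs hmem
    have hsF : s ∈ (S.toFinset : Set V) := by simpa using hs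
    refine linearIndependent_iff_notMem_span.mp hli ⟨s, hsF⟩ ?_
    rwa [aux_image_diff S s hsF, ← aux_toFinset_sub S hnd s hs]

end aux

/-- A multiset `S` with elements in `ℤ_2^k` is reduced if and only if it is a set
(each element has multiplicity one) of linearly independent vectors of `ℤ_2^k`
viewed as a vector space over `𝔽_2`. Consequently, `h_2(k) = k`. -/
theorem reduced_iff_linearIndependent (k : ℕ) (hk : 1 ≤ k) :
    (∀ S : Multiset (Fin k → ZMod 2), IsReducedMultiset S ↔
      (S.Nodup ∧ LinearIndependent (ZMod 2)
        (fun x : (S.toFinset : Set (Fin k → ZMod 2)) => (x : Fin k → ZMod 2)))) ∧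
    hmax 2 k = k := by
  refine ⟨aux_main, ?_⟩
  have hub : ∀ n ∈ {n : ℕ | ∃ S : Multiset (Fin k → ZMod 2),
      IsReducedMultiset S ∧ Multiset.card S = n}, n ≤ k := by
    rintro n ⟨S, hS, rfl⟩
    obtain ⟨hnd, hli⟩ := (aux_main S).mp hS
    have h1 : Multiset.card S = S.toFinset.card := by
      rw [Multiset.toFinset_card_of_nodup hnd]
    rw [h1]
    have := hli.finset_card_le_finrank
    rwa [Module.finrank_pi, Fintype.card_fin] at this
  have hmem : k ∈ {n : ℕ | ∃ S : Multiset (Fin k → ZMod 2),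
      IsReducedMultiset S ∧ Multiset.card S = n} := by
    set b : Fin k → (Fin k → ZMod 2) := fun i => Pi.basisFun (ZMod 2) (Fin k) i with hb
    have hli : LinearIndependent (ZMod 2) b := (Pi.basisFun (ZMod 2) (Fin k)).linearIndependent
    refine ⟨Multiset.map b Finset.univ.val, ?_, by simp⟩
    rw [aux_main]
    have hnd : (Multiset.map b Finset.univ.val).Nodup :=
      Finset.univ.nodup.map hli.injective
    refine ⟨hnd, ?_⟩
    have hset : ((Multiset.map b Finset.univ.val).toFinset :
        Set (Fin k → ZMod 2)) = Set.range b := by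
      ext x
      rw [Finset.mem_coe, Multiset.mem_toFinset, Multiset.mem_map, Set.mem_range]
      constructor
      · rintro ⟨a, -, rfl⟩; exact ⟨a, rfl⟩
      · rintro ⟨a, rfl⟩; exact ⟨a, by simp, rfl⟩
    rw [hset]
    exact (linearIndepOn_id_range_iff hli.injective).mpr hli
  exact le_antisymm (csSup_le ⟨k, hmem⟩ hub) (le_csSup ⟨k, hub⟩ hmem)
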